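/- If P and Q are mutually dense subsets of a common partial order (i.e., every element of P has an element of Q below it and vice versa), and κ is a cardinal, then P has a dense subset D such that no element of D lies below κ-many elements of D if and only if Q has such a dense subset. -/
import Mathlib


open Cardinal

universe u

private lemma aux_dense_dir {α : Type u} [PartialOrder α] (P Q : Set α)
    (κ : Cardinal.{u})
    (hPQ : ∀ p ∈ P, ∃ q ∈ Q, q ≤ p) (hQP : ∀ q ∈ Q, ∃ p ∈ P, p ≤ q) :
    (∃ D ⊆ P, (∀ p ∈ P, ∃ d ∈ D, d ≤ p) ∧
        ∀ d ∈ D, #{e : α // e ∈ D ∧ d ≤ e} < κ) →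
    (∃ E ⊆ Q, (∀ q ∈ Q, ∃ e ∈ E, e ≤ q) ∧
        ∀ d ∈ E, #{e : α // e ∈ E ∧ d ≤ e} < κ) := by
  rintro ⟨D, hDP, hDdense, hDκ⟩
  have h1 : ∀ d : α, d ∈ D → ∃ q, q ∈ Q ∧ q ≤ d := fun d hd => by
    obtain ⟨q, hq, hle⟩ := hPQ d (hDP hd); exact ⟨q, hq, hle⟩
  choose f hfQ hfle using h1
  refine ⟨{e | ∃ d : α, ∃ hd : d ∈ D, f d hd = e}, ?_, ?_, ?_⟩
  · rintro e ⟨d, hd, rfl⟩; exact hfQ d hd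
  · intro q hq
    obtain ⟨p, hp, hpq⟩ := hQP q hq
    obtain ⟨d, hd, hdp⟩ := hDdense p hp
    exact ⟨f d hd, ⟨d, hd, rfl⟩, le_trans (hfle d hd) (le_trans hdp hpq)⟩
  · rintro e ⟨d0, hd0, rfl⟩
    set e := f d0 hd0 with he
    obtain ⟨p, hp, hpe⟩ := hQP e (hfQ d0 hd0)
    obtain ⟨d'', hd'', hdp⟩ := hDdense p hp
    refine lt_of_le_of_lt ?_ (hDκ d'' hd'')
    refine Cardinal.mk_le_of_injective (f := fun x => ?_) ?_
    · refine ⟨x.2.1.choose, x.2.1.choose_spec.choose, ?_⟩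
      have heq : f x.2.1.choose x.2.1.choose_spec.choose = x.1 :=
        x.2.1.choose_spec.choose_spec
      calc d'' ≤ e := le_trans hdp hpe
        _ ≤ x.1 := x.2.2
        _ ≤ _ := heq.symm.le.trans (hfle _ _)
    · intro x y hxy
      have h := congrArg Subtype.val hxy
      simp only at h
      apply Subtype.ext
      have hx : f x.2.1.choose x.2.1.choose_spec.choose = x.1 :=
        x.2.1.choose_spec.choose_spec
      have hy : f y.2.1.choose y.2.1.choose_spec.choose = y.1 :=
        y.2.1.choose_spec.choose_spec
      rw [← hx, ← hy]
      congr 1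

/-- Lemma (mutually dense posets): `P` is almost `κ^op`-like iff `Q` is, where
`D ⊆ P` is dense in `P` if every element of `P` has an element of `D` below it, and
`D` is `κ^op`-like if no element of `D` is below `κ`-many elements of `D`. -/
theorem mutually_dense_almost_opLike {α : Type u} [PartialOrder α] (P Q : Set α)
    (κ : Cardinal.{u})
    (hPQ : ∀ p ∈ P, ∃ q ∈ Q, q ≤ p) (hQP : ∀ q ∈ Q, ∃ p ∈ P, p ≤ q) :
    (∃ D ⊆ P, (∀ p ∈ P, ∃ d ∈ D, d ≤ p) ∧
        ∀ d ∈ D, #{e : α // e ∈ D ∧ d ≤ e} < κ) ↔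
    (∃ E ⊆ Q, (∀ q ∈ Q, ∃ e ∈ E, e ≤ q) ∧
        ∀ d ∈ E, #{e : α // e ∈ E ∧ d ≤ e} < κ) :=
  ⟨aux_dense_dir P Q κ hPQ hQP, aux_dense_dir Q P κ hQP hPQ⟩
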